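/- Let n ≥ 5 be an odd integer. There exists a constant μ(n) > 0, depending only on n, such that for every 0 < μ ≤ μ(n): (a) if a₁ > 0 then ψ₁(t) = Σ_{p≥0} a_{2p+1} t^{2p+1} > 0 for all t ∈ (0,1]; and (b) if a_{n−1} < 0 then ψ₂(t) = Σ_{p≥0} a_{2p} t^{2p} < 0 for all t ∈ (0,1]. -/

import Mathlib

open Set

/-- Coefficients `a_{2p+1}` (indexed by `p`) of the odd power-series solution `ψ₁`:
`a₁` given and `a_{2p+1} = −(2(2p−1)μ/(p[(2p+1)(2p−1)−(n−1)(n−3)])) a_{2p−1}` for `p ≥ 1`. -/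
noncomputable def oddCoeff (n : ℕ) (μ a₁ : ℝ) : ℕ → ℝ
  | 0 => a₁
  | p + 1 =>
    -(2 * (2 * ((p : ℝ) + 1) - 1) * μ /
        (((p : ℝ) + 1) *
          ((2 * ((p : ℝ) + 1) + 1) * (2 * ((p : ℝ) + 1) - 1) - ((n : ℝ) - 1) * ((n : ℝ) - 3)))) *
      oddCoeff n μ a₁ p

/-- `ψ₁(t) = Σ_{p≥0} a_{2p+1} t^{2p+1}`. -/
noncomputable def psiOne (n : ℕ) (μ a₁ : ℝ) (t : ℝ) : ℝ :=
  ∑' p : ℕ, oddCoeff n μ a₁ p * t ^ (2 * p + 1)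

/-- Coefficients `a_{2p}` (indexed by `p`) of the even power-series solution `ψ₂`:
`a_{2p} = 0` for `p < (n−1)/2`, `a_{n−1}` given (at `p = (n−1)/2`), and
`a_{2p} = −(8(p−1)μ/((2p−1)[4p(p−1)−(n−1)(n−3)])) a_{2p−2}` for `p ≥ (n+1)/2`. -/
noncomputable def evenCoeff (n : ℕ) (μ aN : ℝ) : ℕ → ℝ
  | 0 => 0
  | p + 1 =>
    if p + 1 < (n - 1) / 2 then 0
    else if p + 1 = (n - 1) / 2 then aN
    else
      -(8 * (((p : ℝ) + 1) - 1) * μ /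
          ((2 * ((p : ℝ) + 1) - 1) *
            (4 * ((p : ℝ) + 1) * (((p : ℝ) + 1) - 1) - ((n : ℝ) - 1) * ((n : ℝ) - 3)))) *
        evenCoeff n μ aN p

/-- `ψ₂(t) = Σ_{p≥0} a_{2p} t^{2p}`. -/
noncomputable def psiTwo (n : ℕ) (μ aN : ℝ) (t : ℝ) : ℝ :=
  ∑' p : ℕ, evenCoeff n μ aN p * t ^ (2 * p)

/-- The denominator in the odd recursion has absolute value at least 1. -/
lemma odd_denom_ge (n : ℕ) (hodd : Odd n) (p : ℕ) :
    (1 : ℝ) ≤ |(2 * ((p : ℝ) + 1) + 1) * (2 * ((p : ℝ) + 1) - 1) - ((n : ℝ) - 1) * ((n : ℝ) - 3)| := by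
  obtain ⟨k, hk⟩ := hodd
  set d : ℤ := (2 * (p : ℤ) + 3) * (2 * (p : ℤ) + 1) - 2 * (k : ℤ) * (2 * (k : ℤ) - 2) with hd
  have hdodd : Odd d := by
    have h1 : Odd ((2 * (p : ℤ) + 3) * (2 * (p : ℤ) + 1)) :=
      Odd.mul ⟨(p : ℤ) + 1, by ring⟩ ⟨(p : ℤ), by ring⟩
    have h2 : Even (2 * (k : ℤ) * (2 * (k : ℤ) - 2)) := ⟨(k : ℤ) * (2 * (k : ℤ) - 2), by ring⟩
    exact h1.sub_even h2
  have hdne : d ≠ 0 := by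
    rintro h; rw [h] at hdodd; exact (Int.not_odd_iff_even.2 Even.zero) hdodd
  have h1 : (1 : ℤ) ≤ |d| := Int.one_le_abs hdne
  have hcast : ((d : ℤ) : ℝ) =
      (2 * ((p : ℝ) + 1) + 1) * (2 * ((p : ℝ) + 1) - 1) - ((n : ℝ) - 1) * ((n : ℝ) - 3) := by
    have hn : (n : ℝ) = 2 * (k : ℝ) + 1 := by exact_mod_cast congrArg (Nat.cast : ℕ → ℝ) hk
    push_cast [hd]
    rw [hn]; ring
  calc (1 : ℝ) ≤ |((d : ℤ) : ℝ)| := by exact_mod_cast h1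
    _ = _ := by rw [hcast]

lemma oddCoeff_ratio (n : ℕ) (hodd : Odd n) (μ a₁ : ℝ) (hμ : 0 < μ) (p : ℕ) :
    |oddCoeff n μ a₁ (p + 1)| ≤ 4 * μ * |oddCoeff n μ a₁ p| := by
  have hD := odd_denom_ge n hodd p
  set D : ℝ := (2 * ((p : ℝ) + 1) + 1) * (2 * ((p : ℝ) + 1) - 1) - ((n : ℝ) - 1) * ((n : ℝ) - 3)
  have hP : (0 : ℝ) < (p : ℝ) + 1 := by positivity
  have h1 : (1 : ℝ) ≤ (p : ℝ) + 1 := by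
    have : (0 : ℝ) ≤ (p : ℝ) := Nat.cast_nonneg p
    linarith
  have hstep : oddCoeff n μ a₁ (p + 1) =
      -(2 * (2 * ((p : ℝ) + 1) - 1) * μ / (((p : ℝ) + 1) * D)) * oddCoeff n μ a₁ p := rfl
  rw [hstep, abs_mul, abs_neg, abs_div, abs_mul (((p : ℝ) + 1)) D, abs_of_pos hP]
  have hnum : |2 * (2 * ((p : ℝ) + 1) - 1) * μ| = 2 * (2 * ((p : ℝ) + 1) - 1) * μ := by
    apply abs_of_pos; nlinarith
  rw [hnum]
  apply mul_le_mul_of_nonneg_right _ (abs_nonneg _)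
  rw [div_le_iff₀ (by positivity)]
  nlinarith [abs_nonneg D, mul_le_mul_of_nonneg_left hD
    (le_of_lt (by positivity : (0 : ℝ) < 4 * μ * ((p : ℝ) + 1)))]

lemma oddCoeff_bound (n : ℕ) (hodd : Odd n) (μ a₁ : ℝ) (hμ : 0 < μ) (hμ' : μ ≤ 1 / 16) (p : ℕ) :
    |oddCoeff n μ a₁ p| ≤ |a₁| * (1 / 4) ^ p := by
  induction p with
  | zero => simp [oddCoeff]
  | succ p ih =>
    calc |oddCoeff n μ a₁ (p + 1)| ≤ 4 * μ * |oddCoeff n μ a₁ p| :=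
          oddCoeff_ratio n hodd μ a₁ hμ p
      _ ≤ (1 / 4) * (|a₁| * (1 / 4) ^ p) := by
          apply mul_le_mul (by linarith) ih (abs_nonneg _) (by norm_num)
      _ = |a₁| * (1 / 4) ^ (p + 1) := by ring

lemma evenCoeff_of_lt (n : ℕ) (μ aN : ℝ) (p : ℕ) (hp : p < (n - 1) / 2) :
    evenCoeff n μ aN p = 0 := by
  cases p with
  | zero => rfl
  | succ q =>
    show (if q + 1 < (n - 1) / 2 then (0 : ℝ) else _) = 0
    rw [if_pos hp]

lemma evenCoeff_self (n : ℕ) (μ aN : ℝ) (hm : 1 ≤ (n - 1) / 2) :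
    evenCoeff n μ aN ((n - 1) / 2) = aN := by
  obtain ⟨q, hq⟩ : ∃ q, (n - 1) / 2 = q + 1 := ⟨(n - 1) / 2 - 1, by omega⟩
  rw [hq]
  show (if q + 1 < (n - 1) / 2 then (0 : ℝ)
      else if q + 1 = (n - 1) / 2 then aN else _) = aN
  rw [if_neg (by omega), if_pos (by omega)]

lemma evenCoeff_succ_eq (n : ℕ) (μ aN : ℝ) (p : ℕ) (hp : (n - 1) / 2 ≤ p) :
    evenCoeff n μ aN (p + 1) =
      -(8 * (((p : ℝ) + 1) - 1) * μ /
          ((2 * ((p : ℝ) + 1) - 1) *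
            (4 * ((p : ℝ) + 1) * (((p : ℝ) + 1) - 1) - ((n : ℝ) - 1) * ((n : ℝ) - 3)))) *
        evenCoeff n μ aN p := by
  show (if p + 1 < (n - 1) / 2 then (0 : ℝ)
      else if p + 1 = (n - 1) / 2 then aN else _) = _
  rw [if_neg (by omega), if_neg (by omega)]

lemma even_denom_ge (n : ℕ) (hn : 5 ≤ n) (hodd : Odd n) (p : ℕ) (hp : (n - 1) / 2 ≤ p) :
    (4 : ℝ) ≤ 4 * ((p : ℝ) + 1) * (((p : ℝ) + 1) - 1) - ((n : ℝ) - 1) * ((n : ℝ) - 3) := by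
  obtain ⟨k, hk⟩ := hodd
  have hmk : (n - 1) / 2 = k := by omega
  have hk2 : 2 ≤ k := by omega
  have hpk : k ≤ p := by omega
  have hkR : (2 : ℝ) ≤ (k : ℝ) := by exact_mod_cast hk2
  have hpR : (k : ℝ) ≤ (p : ℝ) := by exact_mod_cast hpk
  have hnR : (n : ℝ) = 2 * (k : ℝ) + 1 := by exact_mod_cast congrArg (Nat.cast : ℕ → ℝ) hk
  rw [hnR]
  nlinarith [mul_nonneg (sub_nonneg.2 hpR) (by positivity : (0 : ℝ) ≤ (p : ℝ) + (k : ℝ))]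

lemma evenCoeff_ratio (n : ℕ) (hn : 5 ≤ n) (hodd : Odd n) (μ aN : ℝ) (hμ : 0 < μ) (p : ℕ)
    (hp : (n - 1) / 2 ≤ p) :
    |evenCoeff n μ aN (p + 1)| ≤ 4 * μ * |evenCoeff n μ aN p| := by
  have hD := even_denom_ge n hn hodd p hp
  set D : ℝ := 4 * ((p : ℝ) + 1) * (((p : ℝ) + 1) - 1) - ((n : ℝ) - 1) * ((n : ℝ) - 3)
  have hpR : (0 : ℝ) ≤ (p : ℝ) := Nat.cast_nonneg p
  have h2p : (0 : ℝ) < 2 * ((p : ℝ) + 1) - 1 := by linarith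
  rw [evenCoeff_succ_eq n μ aN p hp, abs_mul, abs_neg, abs_div,
    abs_mul (2 * ((p : ℝ) + 1) - 1) D, abs_of_pos h2p, abs_of_pos (by linarith : (0 : ℝ) < D)]
  have hnum : |8 * (((p : ℝ) + 1) - 1) * μ| = 8 * (((p : ℝ) + 1) - 1) * μ := by
    apply abs_of_nonneg; nlinarith
  rw [hnum]
  apply mul_le_mul_of_nonneg_right _ (abs_nonneg _)
  rw [div_le_iff₀ (by positivity)]
  nlinarith [mul_le_mul_of_nonneg_left hD
    (le_of_lt (by positivity : (0 : ℝ) < 4 * μ * (2 * ((p : ℝ) + 1) - 1)))]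

lemma evenCoeff_bound (n : ℕ) (hn : 5 ≤ n) (hodd : Odd n) (μ aN : ℝ) (hμ : 0 < μ)
    (hμ' : μ ≤ 1 / 16) (k : ℕ) :
    |evenCoeff n μ aN ((n - 1) / 2 + k)| ≤ |aN| * (1 / 4) ^ k := by
  induction k with
  | zero =>
    simp [evenCoeff_self n μ aN (by omega : 1 ≤ (n - 1) / 2)]
  | succ k ih =>
    have hstep := evenCoeff_ratio n hn hodd μ aN hμ ((n - 1) / 2 + k) (by omega)
    calc |evenCoeff n μ aN ((n - 1) / 2 + (k + 1))|
        = |evenCoeff n μ aN (((n - 1) / 2 + k) + 1)| := by ring_nf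
      _ ≤ 4 * μ * |evenCoeff n μ aN ((n - 1) / 2 + k)| := hstep
      _ ≤ (1 / 4) * (|aN| * (1 / 4) ^ k) := by
          apply mul_le_mul (by linarith) ih (abs_nonneg _) (by norm_num)
      _ = |aN| * (1 / 4) ^ (k + 1) := by ring

/-- A tail bounded termwise by `C (1/4)^{k+1}` is summable with sum of absolute value `≤ C/3`. -/
lemma tail_bound (g : ℕ → ℝ) (C : ℝ) (hC : 0 ≤ C) (hg : ∀ k, |g k| ≤ C * (1 / 4) ^ (k + 1)) :
    Summable g ∧ |∑' k, g k| ≤ C / 3 := by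
  have hgeo : Summable (fun k : ℕ => C * (1 / 4 : ℝ) ^ (k + 1)) := by
    have h1 : Summable (fun k : ℕ => (C * (1 / 4)) * (1 / 4 : ℝ) ^ k) :=
      (summable_geometric_of_lt_one (by norm_num) (by norm_num)).mul_left _
    exact h1.congr (fun k => by ring)
  have hsum : Summable g :=
    Summable.of_norm_bounded hgeo (fun k => by rw [Real.norm_eq_abs]; exact hg k)
  have habs : Summable (fun k => ‖g k‖) :=
    Summable.of_nonneg_of_le (fun _ => norm_nonneg _)
      (fun k => by rw [Real.norm_eq_abs]; exact hg k) hgeo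
  refine ⟨hsum, ?_⟩
  have h1 : ‖∑' k, g k‖ ≤ ∑' k, ‖g k‖ := norm_tsum_le_tsum_norm habs
  have h2 : ∑' k, ‖g k‖ ≤ ∑' k, C * (1 / 4 : ℝ) ^ (k + 1) :=
    Summable.tsum_le_tsum (fun k => by rw [Real.norm_eq_abs]; exact hg k) habs hgeo
  have h3 : ∑' k : ℕ, C * (1 / 4 : ℝ) ^ (k + 1) = C / 3 := by
    calc ∑' k : ℕ, C * (1 / 4 : ℝ) ^ (k + 1)
        = ∑' k : ℕ, (C * (1 / 4)) * (1 / 4 : ℝ) ^ k := tsum_congr (fun k => by ring)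
      _ = (C * (1 / 4)) * ∑' k : ℕ, (1 / 4 : ℝ) ^ k := tsum_mul_left
      _ = C / 3 := by
          rw [tsum_geometric_of_lt_one (by norm_num) (by norm_num)]; ring
  rw [Real.norm_eq_abs] at h1
  linarith

/-- For `n ≥ 5` odd there is a constant `μ(n) > 0`, depending only on `n`,
such that for every `0 < μ ≤ μ(n)`: (a) if `a₁ > 0` then `ψ₁ > 0` on `(0,1]`; and
(b) if `a_{n−1} < 0` then `ψ₂ < 0` on `(0,1]`. -/
theorem stmt_12 (n : ℕ) (hn : 5 ≤ n) (hodd : Odd n) :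
    ∃ μn : ℝ, 0 < μn ∧ ∀ μ : ℝ, 0 < μ → μ ≤ μn →
      (∀ a₁ : ℝ, 0 < a₁ → ∀ t ∈ Ioc (0 : ℝ) 1, 0 < psiOne n μ a₁ t) ∧
      (∀ aN : ℝ, aN < 0 → ∀ t ∈ Ioc (0 : ℝ) 1, psiTwo n μ aN t < 0) := by
  refine ⟨1 / 16, by norm_num, fun μ hμ hμ' => ⟨?_, ?_⟩⟩
  · -- odd part
    intro a₁ ha₁ t ht
    obtain ⟨ht0, ht1⟩ := ht
    set f : ℕ → ℝ := fun p => oddCoeff n μ a₁ p * t ^ (2 * p + 1) with hf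
    have hbound : ∀ k : ℕ, |f (k + 1)| ≤ (a₁ * t) * (1 / 4) ^ (k + 1) := by
      intro k
      have hc := oddCoeff_bound n hodd μ a₁ hμ hμ' (k + 1)
      have htp : t ^ (2 * (k + 1) + 1) ≤ t := by
        calc t ^ (2 * (k + 1) + 1) ≤ t ^ 1 :=
              pow_le_pow_of_le_one ht0.le ht1 (by omega)
          _ = t := pow_one t
      calc |f (k + 1)| = |oddCoeff n μ a₁ (k + 1)| * t ^ (2 * (k + 1) + 1) := by
            rw [hf, abs_mul, abs_of_pos (by positivity : (0 : ℝ) < t ^ (2 * (k + 1) + 1))]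
        _ ≤ (|a₁| * (1 / 4) ^ (k + 1)) * t :=
            mul_le_mul hc htp (by positivity) (by positivity)
        _ = (a₁ * t) * (1 / 4) ^ (k + 1) := by rw [abs_of_pos ha₁]; ring
    obtain ⟨htail_sum, htail⟩ := tail_bound (fun k => f (k + 1)) (a₁ * t)
      (by positivity) hbound
    have hsum : Summable f := (summable_nat_add_iff 1).1 htail_sum
    have hdecomp : ∑' p, f p = f 0 + ∑' k, f (k + 1) := Summable.tsum_eq_zero_add hsum
    have hf0 : f 0 = a₁ * t := by simp [hf, oddCoeff]
    have : psiOne n μ a₁ t = f 0 + ∑' k, f (k + 1) := hdecomp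
    rw [this, hf0]
    have h1 : -(a₁ * t / 3) ≤ ∑' k, f (k + 1) := by
      have := abs_le.1 htail
      linarith [this.1]
    have ht0' : 0 < a₁ * t := by positivity
    linarith
  · -- even part
    intro aN haN t ht
    obtain ⟨ht0, ht1⟩ := ht
    set m : ℕ := (n - 1) / 2 with hm
    have hm2 : 2 ≤ m := by omega
    set f : ℕ → ℝ := fun p => evenCoeff n μ aN p * t ^ (2 * p) with hf
    have hbound : ∀ k : ℕ, |f (k + (m + 1))| ≤ (|aN| * t ^ (2 * m)) * (1 / 4) ^ (k + 1) := by
      intro k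
      have heq : k + (m + 1) = m + (k + 1) := by omega
      have hc := evenCoeff_bound n hn hodd μ aN hμ hμ' (k + 1)
      have htp : t ^ (2 * (m + (k + 1))) ≤ t ^ (2 * m) :=
        pow_le_pow_of_le_one ht0.le ht1 (by omega)
      calc |f (k + (m + 1))| = |evenCoeff n μ aN (m + (k + 1))| * t ^ (2 * (m + (k + 1))) := by
            rw [hf, heq, abs_mul, abs_of_pos (by positivity : (0 : ℝ) < t ^ (2 * (m + (k + 1))))]
        _ ≤ (|aN| * (1 / 4) ^ (k + 1)) * t ^ (2 * m) :=
            mul_le_mul hc htp (by positivity) (by positivity)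
        _ = (|aN| * t ^ (2 * m)) * (1 / 4) ^ (k + 1) := by ring
    obtain ⟨htail_sum, htail⟩ := tail_bound (fun k => f (k + (m + 1)))
      (|aN| * t ^ (2 * m)) (by positivity) hbound
    have hsum : Summable f := (summable_nat_add_iff (m + 1)).1 htail_sum
    have hdecomp : ∑' p, f p = (∑ i ∈ Finset.range (m + 1), f i) + ∑' k, f (k + (m + 1)) :=
      (Summable.sum_add_tsum_nat_add (m + 1) hsum).symm
    have hfin : ∑ i ∈ Finset.range (m + 1), f i = aN * t ^ (2 * m) := by
      rw [Finset.sum_eq_single m]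
      · rw [hf]
        simp only []
        rw [evenCoeff_self n μ aN (by omega)]
      · intro b hb hbm
        have hblt : b < m := by
          have := Finset.mem_range.1 hb; omega
        rw [hf]
        simp only []
        rw [evenCoeff_of_lt n μ aN b hblt, zero_mul]
      · intro h
        exact absurd (Finset.mem_range.2 (by omega)) h
    have : psiTwo n μ aN t = (∑ i ∈ Finset.range (m + 1), f i) + ∑' k, f (k + (m + 1)) :=
      hdecomp
    rw [this, hfin]
    have h1 : ∑' k, f (k + (m + 1)) ≤ |aN| * t ^ (2 * m) / 3 := by
      have := abs_le.1 htail
      linarith [this.2]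
    have habsN : |aN| = -aN := abs_of_neg haN
    have htm : (0 : ℝ) < t ^ (2 * m) := by positivity
    rw [habsN] at h1
    nlinarith
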